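/- Let F and B be n × n column-stochastic matrices, let 0 < α₁, α₂, α₃ < 1, and let d ∈ ℝⁿ. Then the solution of the RepRank equation t = α₁ F P₊(t) + α₂ B P₋(t) + α₃ d is unique: if both t and t' satisfy the equation, then t = t'. -/
import Mathlib


open Finset Filter

/-- Replace negative components by zero. -/
def Ppos {n : ℕ} (t : Fin n → ℝ) : Fin n → ℝ := fun i => max (t i) 0

/-- Replace positive components by zero. -/
def Pneg {n : ℕ} (t : Fin n → ℝ) : Fin n → ℝ := fun i => min (t i) 0

/-- ℓ¹ norm on ℝⁿ. -/
def l1 {n : ℕ} (x : Fin n → ℝ) : ℝ := ∑ i, |x i|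

/-- A matrix is column-stochastic if entries are nonnegative and each column sums to 1. -/
def ColStochastic {n : ℕ} (F : Matrix (Fin n) (Fin n) ℝ) : Prop :=
  (∀ i j, 0 ≤ F i j) ∧ ∀ j, ∑ i, F i j = 1

lemma l1_nonneg {n : ℕ} (x : Fin n → ℝ) : 0 ≤ l1 x :=
  Finset.sum_nonneg fun i _ => abs_nonneg _

lemma l1_add_le {n : ℕ} (x y : Fin n → ℝ) : l1 (x + y) ≤ l1 x + l1 y := by
  rw [l1, l1, l1, ← Finset.sum_add_distrib]
  exact Finset.sum_le_sum fun i _ => abs_add_le _ _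

lemma l1_smul {n : ℕ} (c : ℝ) (x : Fin n → ℝ) : l1 (c • x) = |c| * l1 x := by
  simp [l1, Finset.mul_sum, abs_mul]

lemma l1_mulVec_le {n : ℕ} {M : Matrix (Fin n) (Fin n) ℝ} (hM : ColStochastic M)
    (x : Fin n → ℝ) : l1 (M.mulVec x) ≤ l1 x := by
  calc l1 (M.mulVec x) ≤ ∑ i, ∑ j, M i j * |x j| := by
        refine Finset.sum_le_sum fun i _ => ?_
        calc |M.mulVec x i| ≤ ∑ j, |M i j * x j| := by
              simpa [Matrix.mulVec, dotProduct] using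
                Finset.abs_sum_le_sum_abs (fun j => M i j * x j) Finset.univ
        _ = ∑ j, M i j * |x j| := by
              refine Finset.sum_congr rfl fun j _ => ?_
              rw [abs_mul, abs_of_nonneg (hM.1 i j)]
  _ = ∑ j, (∑ i, M i j) * |x j| := by rw [Finset.sum_comm]; simp [Finset.sum_mul]
  _ = l1 x := by simp [hM.2, l1]

lemma max_min_abs_key (a b : ℝ) :
    |max a 0 - max b 0| + |min a 0 - min b 0| = |a - b| := by
  rcases le_total a b with h | h
  · have h1 : max a 0 ≤ max b 0 := max_le_max h le_rfl
    have h2 : min a 0 ≤ min b 0 := min_le_min h le_rfl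
    have e1 : max a 0 + min a 0 = a + 0 := max_add_min a 0
    have e2 : max b 0 + min b 0 = b + 0 := max_add_min b 0
    rw [abs_of_nonpos (by linarith), abs_of_nonpos (by linarith),
      abs_of_nonpos (by linarith)]
    linarith
  · have h1 : max b 0 ≤ max a 0 := max_le_max h le_rfl
    have h2 : min b 0 ≤ min a 0 := min_le_min h le_rfl
    have e1 : max a 0 + min a 0 = a + 0 := max_add_min a 0
    have e2 : max b 0 + min b 0 = b + 0 := max_add_min b 0
    rw [abs_of_nonneg (by linarith), abs_of_nonneg (by linarith),
      abs_of_nonneg (by linarith)]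
    linarith

theorem repRank_unique {n : ℕ} (F B : Matrix (Fin n) (Fin n) ℝ)
    (hF : ColStochastic F) (hB : ColStochastic B)
    (α₁ α₂ α₃ : ℝ) (hα₁ : 0 < α₁) (hα₁' : α₁ < 1) (hα₂ : 0 < α₂) (hα₂' : α₂ < 1)
    (hα₃ : 0 < α₃) (hα₃' : α₃ < 1) (d : Fin n → ℝ) (t t' : Fin n → ℝ)
    (ht : t = α₁ • F.mulVec (Ppos t) + α₂ • B.mulVec (Pneg t) + α₃ • d)
    (ht' : t' = α₁ • F.mulVec (Ppos t') + α₂ • B.mulVec (Pneg t') + α₃ • d) :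
    t = t' := by
  have heq : t - t' = α₁ • F.mulVec (Ppos t - Ppos t') + α₂ • B.mulVec (Pneg t - Pneg t') := by
    conv_lhs => rw [ht, ht']
    rw [Matrix.mulVec_sub, Matrix.mulVec_sub]
    module
  set p : Fin n → ℝ := Ppos t - Ppos t' with hp
  set q : Fin n → ℝ := Pneg t - Pneg t' with hq
  have hsplit : l1 p + l1 q = l1 (t - t') := by
    rw [l1, l1, l1, ← Finset.sum_add_distrib]
    refine Finset.sum_congr rfl fun i _ => ?_
    simpa [hp, hq, Ppos, Pneg] using max_min_abs_key (t i) (t' i)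
  set α : ℝ := max α₁ α₂ with hα
  have hα1 : α < 1 := max_lt hα₁' hα₂'
  have h1 : l1 (t - t') ≤ α * l1 (t - t') := by
    calc l1 (t - t') = l1 (α₁ • F.mulVec p + α₂ • B.mulVec q) := by rw [heq]
    _ ≤ l1 (α₁ • F.mulVec p) + l1 (α₂ • B.mulVec q) := l1_add_le _ _
    _ = α₁ * l1 (F.mulVec p) + α₂ * l1 (B.mulVec q) := by
        rw [l1_smul, l1_smul, abs_of_pos hα₁, abs_of_pos hα₂]
    _ ≤ α₁ * l1 p + α₂ * l1 q := by
        gcongr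
        · exact l1_mulVec_le hF p
        · exact l1_mulVec_le hB q
    _ ≤ α * l1 p + α * l1 q := by
        gcongr
        · exact l1_nonneg p
        · exact le_max_left _ _
        · exact l1_nonneg q
        · exact le_max_right _ _
    _ = α * (l1 p + l1 q) := by ring
    _ = α * l1 (t - t') := by rw [hsplit]
  have hL0 : l1 (t - t') = 0 := by
    have hLnn := l1_nonneg (t - t')
    nlinarith
  funext i
  have : ∀ i ∈ Finset.univ, |(t - t') i| = 0 :=
    (Finset.sum_eq_zero_iff_of_nonneg (fun i _ => abs_nonneg _)).mp hL0
  have := this i (Finset.mem_univ i)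
  have := abs_eq_zero.mp this
  simpa [sub_eq_zero] using this
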